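/- Let f : X → X be a continuous map on a metric space (X,d), let r > 0, and let x, y ∈ X be such that d(f^j(x), f^j(y)) ≤ r for all j ∈ ℕ. If (x,y) is a mean Li–Yorke ε-pair for f and d for some ε > 0, then (x,y) is a distributional ε/(r+1)-pair of type 2 for f and d. -/

import Mathlib

open Filter

/-- Lower density of a set of positive integers. -/
noncomputable def lowerDensity (A : Set ℕ) : ℝ :=
  liminf (fun n : ℕ => (Nat.card ↥(A ∩ Set.Icc 1 n) : ℝ) / (n : ℝ)) atTop

/-- Upper density of a set of positive integers. -/
noncomputable def upperDensity (A : Set ℕ) : ℝ :=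
  limsup (fun n : ℕ => (Nat.card ↥(A ∩ Set.Icc 1 n) : ℝ) / (n : ℝ)) atTop

/-- The lower distributional function Φ_{(x,y)}(δ) generated by `f` for the pair `(x,y)`. -/
noncomputable def lowerDistFn {X : Type*} [MetricSpace X] (f : X → X) (x y : X) (δ : ℝ) : ℝ :=
  lowerDensity {j : ℕ | dist (f^[j] x) (f^[j] y) < δ}

/-- The upper distributional function Φ*_{(x,y)}(δ) generated by `f` for the pair `(x,y)`. -/
noncomputable def upperDistFn {X : Type*} [MetricSpace X] (f : X → X) (x y : X) (δ : ℝ) : ℝ :=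
  upperDensity {j : ℕ | dist (f^[j] x) (f^[j] y) < δ}

/-- `(x,y)` is a mean Li–Yorke ε-pair for `f` and the metric of `X`. -/
def IsMLYPair {X : Type*} [MetricSpace X] (f : X → X) (ε : ℝ) (x y : X) : Prop :=
  ε ≤ limsup (fun n : ℕ => (∑ j ∈ Finset.Icc 1 n, dist (f^[j] x) (f^[j] y)) / (n : ℝ)) atTop ∧
    liminf (fun n : ℕ => (∑ j ∈ Finset.Icc 1 n, dist (f^[j] x) (f^[j] y)) / (n : ℝ)) atTop = 0

open Classical in
lemma natCard_inter_Icc' (A : Set ℕ) (n : ℕ) :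
    Nat.card ↥(A ∩ Set.Icc 1 n) = ((Finset.Icc 1 n).filter (· ∈ A)).card := by
  have h : A ∩ Set.Icc 1 n = ↑((Finset.Icc 1 n).filter (· ∈ A)) := by
    ext j
    simp only [Set.mem_inter_iff, Finset.coe_filter, Finset.mem_Icc, Set.mem_setOf_eq,
      Set.mem_Icc]
    tauto
  rw [h, Nat.card_coe_set_eq, Set.ncard_coe_finset]

/-- If `d(f^j(x), f^j(y)) ≤ r` for all `j ∈ ℕ` and `(x,y)` is a mean Li–Yorke ε-pair, then
`(x,y)` is a distributional `ε/(r+1)`-pair of type 2. -/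
theorem mlyPair_isD2Pair {X : Type*} [MetricSpace X] (f : X → X) (hf : Continuous f)
    (r : ℝ) (hr : 0 < r) (x y : X)
    (hbd : ∀ j : ℕ, 1 ≤ j → dist (f^[j] x) (f^[j] y) ≤ r)
    (ε : ℝ) (hε : 0 < ε) (hMLY : IsMLYPair f ε x y) :
    lowerDistFn f x y (ε / (r + 1)) ≤ 1 - ε / (r + 1) ∧
      ∀ δ : ℝ, 0 < δ → upperDistFn f x y δ = 1 := by
  classical
  obtain ⟨hsup, hinf⟩ := hMLY
  set a : ℕ → ℝ := fun j => dist (f^[j] x) (f^[j] y) with ha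
  set S : ℕ → ℝ := fun n => (∑ j ∈ Finset.Icc 1 n, a j) / (n : ℝ) with hSdef
  have hS0 : ∀ n, 0 ≤ S n := fun n =>
    div_nonneg (Finset.sum_nonneg fun j _ => dist_nonneg) (Nat.cast_nonneg n)
  have hSr : ∀ n, S n ≤ r := by
    intro n
    rcases Nat.eq_zero_or_pos n with h0 | hn
    · subst h0; simpa [hSdef] using hr.le
    · have hn' : (0:ℝ) < n := by exact_mod_cast hn
      rw [hSdef, div_le_iff₀ hn']
      calc ∑ j ∈ Finset.Icc 1 n, a j ≤ ∑ j ∈ Finset.Icc 1 n, r :=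
            Finset.sum_le_sum fun j hj => hbd j (Finset.mem_Icc.mp hj).1
        _ = r * n := by simp [mul_comm]
  have hScob : IsCoboundedUnder (· ≤ ·) atTop S :=
    isCoboundedUnder_le_of_le atTop fun n => hS0 n
  have hScob' : IsCoboundedUnder (· ≥ ·) atTop S :=
    isCoboundedUnder_ge_of_le atTop fun n => hSr n
  -- density helper facts, for an arbitrary set A
  have hcard_eq : ∀ (A : Set ℕ) (n : ℕ),
      (Nat.card ↥(A ∩ Set.Icc 1 n) : ℝ) = (((Finset.Icc 1 n).filter (· ∈ A)).card : ℝ) := by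
    intro A n; exact_mod_cast natCard_inter_Icc' A n
  have hcard_le : ∀ (A : Set ℕ) (n : ℕ),
      (((Finset.Icc 1 n).filter (· ∈ A)).card : ℝ) ≤ n := by
    intro A n
    have : ((Finset.Icc 1 n).filter (· ∈ A)).card ≤ n := by
      calc ((Finset.Icc 1 n).filter (· ∈ A)).card ≤ (Finset.Icc 1 n).card :=
            Finset.card_filter_le _ _
        _ = n := by simp
    exact_mod_cast this
  have hεr : ε ≤ r := hsup.trans (limsup_le_of_le hScob (Eventually.of_forall hSr))
  set η := ε / (r + 1) with hηdef
  have hη : 0 < η := div_pos hε (by linarith)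
  have hηr : η < r := by
    rw [hηdef, div_lt_iff₀ (by linarith)]
    nlinarith
  have hεη : ε = η * (r + 1) := by
    rw [hηdef]; field_simp
  constructor
  · -- Part 1
    rw [lowerDistFn, lowerDensity]
    set A : Set ℕ := {j : ℕ | dist (f^[j] x) (f^[j] y) < η} with hA
    set c : ℕ → ℝ := fun n => (Nat.card ↥(A ∩ Set.Icc 1 n) : ℝ) / (n : ℝ) with hc
    show liminf c atTop ≤ 1 - η
    by_contra hcon
    push_neg at hcon
    have hcbd : IsBoundedUnder (· ≥ ·) atTop c :=
      isBoundedUnder_of ⟨0, fun n => div_nonneg (Nat.cast_nonneg _) (Nat.cast_nonneg _)⟩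
    have hev : ∀ᶠ n in atTop, 1 - η < c n := eventually_lt_of_lt_liminf hcon hcbd
    have key : ∀ n : ℕ, 1 ≤ n → S n ≤ r - (r - η) * c n := by
      intro n hn
      have hn' : (0:ℝ) < n := by exact_mod_cast hn
      set k : ℕ := ((Finset.Icc 1 n).filter (· ∈ A)).card with hk
      have hkn : (k : ℝ) ≤ n := hcard_le A n
      have hsplit : ((Finset.Icc 1 n).filter (· ∉ A)).card = n - k := by
        have := Finset.card_filter_add_card_filter_not
          (s := Finset.Icc 1 n) (p := (· ∈ A))
        rw [Nat.card_Icc] at this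
        omega
      have hsum : ∑ j ∈ Finset.Icc 1 n, a j ≤ k * η + ((n : ℝ) - k) * r := by
        rw [← Finset.sum_filter_add_sum_filter_not (Finset.Icc 1 n) (· ∈ A)]
        have h1 : ∑ j ∈ (Finset.Icc 1 n).filter (· ∈ A), a j ≤ k * η := by
          have := Finset.sum_le_card_nsmul ((Finset.Icc 1 n).filter (· ∈ A)) a η
            (fun j hj => le_of_lt (Finset.mem_filter.mp hj).2)
          simpa [nsmul_eq_mul] using this
        have h2 : ∑ j ∈ (Finset.Icc 1 n).filter (· ∉ A), a j ≤ ((n : ℝ) - k) * r := by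
          have h2' := Finset.sum_le_card_nsmul ((Finset.Icc 1 n).filter (· ∉ A)) a r
            (fun j hj => hbd j (Finset.mem_Icc.mp (Finset.mem_filter.mp hj).1).1)
          rw [hsplit] at h2'
          have hkn' : k ≤ n := by exact_mod_cast hkn
          have : ((n - k : ℕ) : ℝ) = (n : ℝ) - k := by
            rw [Nat.cast_sub hkn']
          simpa [nsmul_eq_mul, this] using h2'
        linarith
      rw [hSdef, div_le_iff₀ hn']
      have hcn : c n = (k : ℝ) / n := by simp only [hc]; rw [hcard_eq A n]
      rw [hcn]
      have : ((k:ℝ) / n) * n = (k:ℝ) := by field_simp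
      nlinarith [hsum]
    have hev2 : ∀ᶠ n in atTop, S n ≤ ε - η * η := by
      filter_upwards [hev, eventually_ge_atTop 1] with n h1 h2
      have := key n h2
      nlinarith [hεη]
    have hls : limsup S atTop ≤ ε - η * η := limsup_le_of_le hScob hev2
    nlinarith [hsup]
  · -- Part 2
    intro δ hδ
    rw [upperDistFn, upperDensity]
    set B : Set ℕ := {j : ℕ | dist (f^[j] x) (f^[j] y) < δ} with hB
    set b : ℕ → ℝ := fun n => (Nat.card ↥(B ∩ Set.Icc 1 n) : ℝ) / (n : ℝ) with hb
    have hb0 : ∀ n, 0 ≤ b n := fun n =>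
      div_nonneg (Nat.cast_nonneg _) (Nat.cast_nonneg _)
    have hb1 : ∀ n, b n ≤ 1 := by
      intro n
      rcases Nat.eq_zero_or_pos n with h0 | hn
      · subst h0; simp [hb]
      · have hn' : (0:ℝ) < n := by exact_mod_cast hn
        rw [hb]
        rw [div_le_one hn', hcard_eq B n]
        exact hcard_le B n
    have hbbd : IsBoundedUnder (· ≤ ·) atTop b := isBoundedUnder_of ⟨1, hb1⟩
    have hbcob : IsCoboundedUnder (· ≤ ·) atTop b :=
      isCoboundedUnder_le_of_le atTop hb0
    refine le_antisymm (limsup_le_of_le hbcob (Eventually.of_forall hb1)) ?_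
    by_contra hcon
    push_neg at hcon
    obtain ⟨t, ht1, ht2⟩ := exists_between hcon
    have hev : ∀ᶠ n in atTop, b n < t := eventually_lt_of_limsup_lt ht1 hbbd
    have key2 : ∀ n : ℕ, 1 ≤ n → δ * (1 - b n) ≤ S n := by
      intro n hn
      have hn' : (0:ℝ) < n := by exact_mod_cast hn
      set k : ℕ := ((Finset.Icc 1 n).filter (· ∈ B)).card with hk
      have hkn : (k : ℝ) ≤ n := hcard_le B n
      have hkn' : k ≤ n := by exact_mod_cast hkn
      have hsplit : ((Finset.Icc 1 n).filter (· ∉ B)).card = n - k := by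
        have := Finset.card_filter_add_card_filter_not
          (s := Finset.Icc 1 n) (p := (· ∈ B))
        rw [Nat.card_Icc] at this
        omega
      have hsum : ((n : ℝ) - k) * δ ≤ ∑ j ∈ Finset.Icc 1 n, a j := by
        have h1 : ((n : ℝ) - k) * δ ≤ ∑ j ∈ (Finset.Icc 1 n).filter (· ∉ B), a j := by
          have h2' := Finset.card_nsmul_le_sum ((Finset.Icc 1 n).filter (· ∉ B)) a δ
            (fun j hj => not_lt.mp (Finset.mem_filter.mp hj).2)
          rw [hsplit] at h2'
          have : ((n - k : ℕ) : ℝ) = (n : ℝ) - k := by rw [Nat.cast_sub hkn']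
          simpa [nsmul_eq_mul, this] using h2'
        refine h1.trans (Finset.sum_le_sum_of_subset_of_nonneg (Finset.filter_subset _ _)
          fun j _ _ => dist_nonneg)
      rw [hSdef, le_div_iff₀ hn']
      have hbn : b n = (k : ℝ) / n := by simp only [hb]; rw [hcard_eq B n]
      rw [hbn]
      have : ((k:ℝ) / n) * n = (k:ℝ) := by field_simp
      nlinarith [hsum]
    have hev2 : ∀ᶠ n in atTop, δ * (1 - t) ≤ S n := by
      filter_upwards [hev, eventually_ge_atTop 1] with n h1 h2
      have := key2 n h2
      nlinarith
    have hli : δ * (1 - t) ≤ liminf S atTop := le_liminf_of_le hScob' hev2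
    rw [hinf] at hli
    nlinarith
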